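/- Let ρ be a Borel measure on ℝ with 0 < ρ({β : |β| > 1}) < ∞, and define p_max := sup{ p > 0 : ∫_{|β|>1} |β|^p ρ(dβ) < ∞ } ∈ [0,∞]. If p_max > 0, then for every q ≥ 0 the upper index satisfies τ̄^{(q)}(ρ) = min(p_max, q), and consequently min(p_max, q) ≤ τ̲^{(q)}(ρ) ≤ q. -/

import Mathlib

open MeasureTheory Filter
open scoped ENNReal Topology

/-- The tail functional `I_q(ξ) = ∫_{|β|>1} min(ξ^q |β|^q, 1) ρ(dβ)`. -/
noncomputable def tailFunctional (ρ : Measure ℝ) (q ξ : ℝ) : ℝ≥0∞ :=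
  ∫⁻ β in {β : ℝ | 1 < |β|}, ENNReal.ofReal (min (ξ ^ q * |β| ^ q) 1) ∂ρ

/-- The upper index `τ̄^{(q)}(ρ) = inf{τ ≥ 0 : limsup_{ξ→0+} ξ^{-τ} I_q(ξ) = ∞}`,
with `inf ∅ = ∞`. -/
noncomputable def tauUpper (ρ : Measure ℝ) (q : ℝ) : ℝ≥0∞ :=
  sInf {t : ℝ≥0∞ | ∃ τ : ℝ, 0 ≤ τ ∧ t = ENNReal.ofReal τ ∧
    limsup (fun ξ : ℝ => ENNReal.ofReal (ξ ^ (-τ)) * tailFunctional ρ q ξ) (𝓝[>] 0) = ∞}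

/-- The lower index `τ̲^{(q)}(ρ) = inf{τ ≥ 0 : liminf_{ξ→0+} ξ^{-τ} I_q(ξ) = ∞}`,
with `inf ∅ = ∞`. -/
noncomputable def tauLower (ρ : Measure ℝ) (q : ℝ) : ℝ≥0∞ :=
  sInf {t : ℝ≥0∞ | ∃ τ : ℝ, 0 ≤ τ ∧ t = ENNReal.ofReal τ ∧
    liminf (fun ξ : ℝ => ENNReal.ofReal (ξ ^ (-τ)) * tailFunctional ρ q ξ) (𝓝[>] 0) = ∞}

/-- `p_max(ρ) = sup{p > 0 : ∫_{|β|>1} |β|^p ρ(dβ) < ∞}`, with `sup ∅ = 0`, valued in `[0,∞]`. -/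
noncomputable def pMax (ρ : Measure ℝ) : ℝ≥0∞ :=
  sSup {t : ℝ≥0∞ | ∃ p : ℝ, 0 < p ∧ t = ENNReal.ofReal p ∧
    (∫⁻ β in {β : ℝ | 1 < |β|}, ENNReal.ofReal (|β| ^ p) ∂ρ) < ∞}

open Set

lemma measA : MeasurableSet {β : ℝ | 1 < |β|} :=
  (isOpen_lt continuous_const continuous_abs).measurableSet

-- measure of tail is below I_q
lemma tf_tail (ρ : Measure ℝ) {q ξ : ℝ} (hq : 0 ≤ q) (hξ : 0 < ξ) (hξ1 : ξ < 1) :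
    ρ {β : ℝ | ξ⁻¹ ≤ |β|} ≤ tailFunctional ρ q ξ := by
  have hsub : {β : ℝ | ξ⁻¹ ≤ |β|} ⊆ {β : ℝ | 1 < |β|} := by
    intro β hβ
    exact lt_of_lt_of_le ((one_lt_inv₀ hξ).2 hξ1) hβ
  have hmeas : MeasurableSet {β : ℝ | ξ⁻¹ ≤ |β|} :=
    (isClosed_le continuous_const continuous_abs).measurableSet
  calc ρ {β : ℝ | ξ⁻¹ ≤ |β|}
      = ∫⁻ _ in {β : ℝ | ξ⁻¹ ≤ |β|}, 1 ∂ρ := by rw [setLIntegral_one]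
    _ ≤ ∫⁻ β in {β : ℝ | ξ⁻¹ ≤ |β|}, ENNReal.ofReal (min (ξ ^ q * |β| ^ q) 1) ∂ρ := by
        refine setLIntegral_mono (by fun_prop) (fun β hβ => ?_)
        have h1 : (1:ℝ) ≤ ξ ^ q * |β| ^ q := by
          have : (1:ℝ) = ξ ^ q * (ξ⁻¹) ^ q := by
            rw [← Real.mul_rpow hξ.le (inv_nonneg.2 hξ.le), mul_inv_cancel₀ hξ.ne',
              Real.one_rpow]
          rw [this]
          have := Real.rpow_le_rpow (inv_nonneg.2 hξ.le) hβ hq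
          exact mul_le_mul_of_nonneg_left this (Real.rpow_nonneg hξ.le q)
        simp [min_eq_right h1]
    _ ≤ tailFunctional ρ q ξ := lintegral_mono_set hsub

-- moment monotonicity
lemma moment_mono (ρ : Measure ℝ) {p p' : ℝ} (hp' : 0 ≤ p') (h : p' ≤ p) :
    (∫⁻ β in {β : ℝ | 1 < |β|}, ENNReal.ofReal (|β| ^ p') ∂ρ) ≤
      ∫⁻ β in {β : ℝ | 1 < |β|}, ENNReal.ofReal (|β| ^ p) ∂ρ := by
  refine setLIntegral_mono (by fun_prop) (fun β hβ => ?_)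
  exact ENNReal.ofReal_le_ofReal (Real.rpow_le_rpow_of_exponent_le (le_of_lt hβ) h)

-- upper bound using a finite moment
lemma tf_upper (ρ : Measure ℝ) {q p ξ : ℝ} (hp : 0 ≤ p) (hpq : p ≤ q) (hξ : 0 < ξ) :
    tailFunctional ρ q ξ ≤
      ENNReal.ofReal (ξ ^ p) * ∫⁻ β in {β : ℝ | 1 < |β|}, ENNReal.ofReal (|β| ^ p) ∂ρ := by
  rw [tailFunctional, ← lintegral_const_mul' _ _ ENNReal.ofReal_ne_top]
  refine setLIntegral_mono (by fun_prop) (fun β hβ => ?_)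
  rw [← ENNReal.ofReal_mul (Real.rpow_nonneg hξ.le p)]
  refine ENNReal.ofReal_le_ofReal ?_
  have hβ0 : (0:ℝ) < |β| := lt_trans one_pos hβ
  have key : min (ξ ^ q * |β| ^ q) 1 ≤ (ξ * |β|) ^ p := by
    rcases le_or_gt (ξ * |β|) 1 with hle | hlt
    · refine le_trans (min_le_left _ _) ?_
      rw [← Real.mul_rpow hξ.le hβ0.le]
      exact Real.rpow_le_rpow_of_exponent_ge (mul_pos hξ hβ0) hle hpq
    · refine le_trans (min_le_right _ _) ?_
      exact Real.one_le_rpow hlt.le hp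
  rw [Real.mul_rpow hξ.le hβ0.le] at key
  exact key

-- lower bound by constant
lemma tf_lower (ρ : Measure ℝ) {q ξ : ℝ} (hq : 0 ≤ q) (hξ : 0 < ξ) (hξ1 : ξ ≤ 1) :
    ENNReal.ofReal (ξ ^ q) * ρ {β : ℝ | 1 < |β|} ≤ tailFunctional ρ q ξ := by
  rw [tailFunctional, ← setLIntegral_const]
  refine setLIntegral_mono (by fun_prop) (fun β hβ => ?_)
  refine ENNReal.ofReal_le_ofReal (le_min ?_ (Real.rpow_le_one hξ.le hξ1 hq))
  calc ξ ^ q = ξ ^ q * 1 := (mul_one _).symm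
  _ ≤ ξ ^ q * |β| ^ q := by
      gcongr
      exact Real.one_le_rpow (le_of_lt hβ) hq

lemma liminf_top_of_gt (ρ : Measure ℝ) (h0 : 0 < ρ {β : ℝ | 1 < |β|})
    {q τ : ℝ} (hq : 0 ≤ q) (hτ : q < τ) :
    liminf (fun ξ : ℝ => ENNReal.ofReal (ξ ^ (-τ)) * tailFunctional ρ q ξ) (𝓝[>] 0) = ∞ := by
  set A := {β : ℝ | 1 < |β|}
  have hg : Tendsto (fun ξ : ℝ => ENNReal.ofReal (ξ ^ (q - τ)) * ρ A) (𝓝[>] (0:ℝ)) (𝓝 ∞) := by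
    have h1 : Tendsto (fun ξ : ℝ => ξ ^ (q - τ)) (𝓝[>] (0:ℝ)) atTop := by
      have h2 : Tendsto (fun ξ : ℝ => (ξ⁻¹) ^ (τ - q)) (𝓝[>] (0:ℝ)) atTop :=
        (tendsto_rpow_atTop (by linarith)).comp tendsto_inv_nhdsGT_zero
      refine h2.congr' ?_
      filter_upwards [self_mem_nhdsWithin] with ξ (hξ : 0 < ξ)
      rw [Real.inv_rpow hξ.le, ← Real.rpow_neg hξ.le, neg_sub]
    have h3 := ENNReal.Tendsto.mul_const (b := ρ A) (ENNReal.tendsto_ofReal_atTop.comp h1) (Or.inl (by simp))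
    rwa [ENNReal.top_mul h0.ne'] at h3
  have hle : ∀ᶠ ξ in 𝓝[>] (0:ℝ),
      ENNReal.ofReal (ξ ^ (q - τ)) * ρ A ≤ ENNReal.ofReal (ξ ^ (-τ)) * tailFunctional ρ q ξ := by
    filter_upwards [Ioo_mem_nhdsGT_of_mem ⟨le_refl (0:ℝ), one_pos⟩] with ξ hξ
    obtain ⟨hξ0, hξ1⟩ := hξ
    calc ENNReal.ofReal (ξ ^ (q - τ)) * ρ A
        = ENNReal.ofReal (ξ ^ (-τ)) * (ENNReal.ofReal (ξ ^ q) * ρ A) := by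
          rw [← mul_assoc, ← ENNReal.ofReal_mul (Real.rpow_nonneg hξ0.le _),
            ← Real.rpow_add hξ0]
          ring_nf
      _ ≤ ENNReal.ofReal (ξ ^ (-τ)) * tailFunctional ρ q ξ :=
          mul_le_mul_right (tf_lower ρ hq hξ0 hξ1.le) _
  have := liminf_le_liminf hle
  rw [hg.liminf_eq] at this
  exact top_le_iff.mp this

lemma limsup_ne_top_of_moment (ρ : Measure ℝ) {q τ p : ℝ} (hτ0 : 0 ≤ τ) (hτp : τ < p)
    (hpq : p ≤ q)
    (hfin : (∫⁻ β in {β : ℝ | 1 < |β|}, ENNReal.ofReal (|β| ^ p) ∂ρ) < ∞) :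
    limsup (fun ξ : ℝ => ENNReal.ofReal (ξ ^ (-τ)) * tailFunctional ρ q ξ) (𝓝[>] 0) ≠ ∞ := by
  set C := ∫⁻ β in {β : ℝ | 1 < |β|}, ENNReal.ofReal (|β| ^ p) ∂ρ with hC
  have hp0 : 0 ≤ p := le_trans hτ0 hτp.le
  have hbound : ∀ᶠ ξ in 𝓝[>] (0:ℝ),
      ENNReal.ofReal (ξ ^ (-τ)) * tailFunctional ρ q ξ ≤ C := by
    filter_upwards [Ioo_mem_nhdsGT_of_mem ⟨le_refl (0:ℝ), one_pos⟩] with ξ ⟨hξ0, hξ1⟩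
    calc ENNReal.ofReal (ξ ^ (-τ)) * tailFunctional ρ q ξ
        ≤ ENNReal.ofReal (ξ ^ (-τ)) * (ENNReal.ofReal (ξ ^ p) * C) :=
          mul_le_mul_right (tf_upper ρ hp0 hpq hξ0) _
      _ = ENNReal.ofReal (ξ ^ (p - τ)) * C := by
          rw [← mul_assoc, ← ENNReal.ofReal_mul (Real.rpow_nonneg hξ0.le _),
            ← Real.rpow_add hξ0]
          ring_nf
      _ ≤ 1 * C := by
          gcongr
          refine ENNReal.ofReal_le_one.mpr (Real.rpow_le_one hξ0.le hξ1.le (by linarith))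
      _ = C := one_mul C
  have := limsup_le_of_le (by isBoundedDefault) hbound
  exact ne_top_of_le_ne_top hfin.ne this

lemma moment_finite_of_limsup_ne_top (ρ : Measure ℝ) (h1 : ρ {β : ℝ | 1 < |β|} < ∞)
    {q τ p : ℝ} (hτ0 : 0 < τ) (hτq : τ ≤ q) (hp0 : 0 < p) (hpτ : p < τ)
    (hns : limsup (fun ξ : ℝ => ENNReal.ofReal (ξ ^ (-τ)) * tailFunctional ρ q ξ)
      (𝓝[>] 0) ≠ ∞) :
    (∫⁻ β in {β : ℝ | 1 < |β|}, ENNReal.ofReal (|β| ^ p) ∂ρ) < ∞ := by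
  classical
  set A := {β : ℝ | 1 < |β|} with hA
  set F := fun ξ : ℝ => ENNReal.ofReal (ξ ^ (-τ)) * tailFunctional ρ q ξ with hF
  set C := limsup F (𝓝[>] (0:ℝ)) + 1 with hCdef
  have hC : C ≠ ∞ := by
    rw [hCdef]
    exact ENNReal.add_ne_top.mpr ⟨hns, ENNReal.one_ne_top⟩
  have hev : ∀ᶠ ξ in 𝓝[>] (0:ℝ), F ξ < C :=
    eventually_lt_of_limsup_lt (ENNReal.lt_add_right hns one_ne_zero)
  obtain ⟨u, hu, hsub⟩ := mem_nhdsGT_iff_exists_Ioo_subset.mp hev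
  set v := min u 1 with hv
  have hv0 : 0 < v := lt_min hu one_pos
  have hv1 : v ≤ 1 := min_le_right _ _
  -- tail estimate
  have htail : ∀ ξ : ℝ, 0 < ξ → ξ < v → ρ {β : ℝ | ξ⁻¹ ≤ |β|} ≤ ENNReal.ofReal (ξ ^ τ) * C := by
    intro ξ hξ0 hξv
    have hFξ : F ξ < C := hsub ⟨hξ0, lt_of_lt_of_le hξv (min_le_left _ _)⟩
    have hIC : tailFunctional ρ q ξ ≤ ENNReal.ofReal (ξ ^ τ) * C := by
      have h1' : tailFunctional ρ q ξ
          = ENNReal.ofReal (ξ ^ τ) * (ENNReal.ofReal (ξ ^ (-τ)) * tailFunctional ρ q ξ) := by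
        rw [← mul_assoc, ← ENNReal.ofReal_mul (Real.rpow_nonneg hξ0.le _),
          ← Real.rpow_add hξ0, add_neg_cancel, Real.rpow_zero, ENNReal.ofReal_one, one_mul]
      rw [h1']
      exact mul_le_mul_right hFξ.le _
    exact le_trans (tf_tail ρ (le_trans hτ0.le hτq) hξ0 (lt_of_lt_of_le hξv hv1)) hIC
  -- choose N
  obtain ⟨N, hN⟩ := pow_unbounded_of_one_lt (v⁻¹) (one_lt_two (α := ℝ))
  have hNv : (2:ℝ) ^ (-(N:ℝ)) < v := by
    rw [Real.rpow_neg (by norm_num), Real.rpow_natCast]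
    exact (inv_lt_comm₀ (by positivity) hv0).mpr hN
  set C' := C + ρ A * ENNReal.ofReal (2 ^ ((N:ℝ) * τ)) with hC'def
  have hC' : C' ≠ ∞ := by
    rw [hC'def]
    exact ENNReal.add_ne_top.mpr ⟨hC, (ENNReal.mul_lt_top h1 ENNReal.ofReal_lt_top).ne⟩
  -- dyadic tail bound
  have htailk : ∀ k : ℕ, ρ ({β : ℝ | (2:ℝ) ^ (k:ℝ) ≤ |β|} ∩ A)
      ≤ C' * ENNReal.ofReal (2 ^ (-(k:ℝ) * τ)) := by
    intro k
    rcases le_or_gt (N:ℝ) (k:ℝ) with hk | hk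
    · set ξ := (2:ℝ) ^ (-(k:ℝ)) with hξdef
      have hξ0 : 0 < ξ := Real.rpow_pos_of_pos (by norm_num) _
      have hξv : ξ < v :=
        lt_of_le_of_lt (Real.rpow_le_rpow_of_exponent_le one_le_two (by linarith)) hNv
      have hinv : ξ⁻¹ = (2:ℝ) ^ (k:ℝ) := by
        rw [hξdef, Real.rpow_neg (by norm_num), inv_inv]
      calc ρ ({β : ℝ | (2:ℝ) ^ (k:ℝ) ≤ |β|} ∩ A)
          ≤ ρ {β : ℝ | ξ⁻¹ ≤ |β|} := by rw [hinv]; exact measure_mono inter_subset_left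
        _ ≤ ENNReal.ofReal (ξ ^ τ) * C := htail ξ hξ0 hξv
        _ ≤ C' * ENNReal.ofReal (2 ^ (-(k:ℝ) * τ)) := by
            rw [hξdef, ← Real.rpow_mul (by norm_num : (0:ℝ) ≤ 2), mul_comm]
            exact mul_le_mul_left le_self_add _
    · calc ρ ({β : ℝ | (2:ℝ) ^ (k:ℝ) ≤ |β|} ∩ A) ≤ ρ A := measure_mono inter_subset_right
        _ = ρ A * 1 := (mul_one _).symm
        _ ≤ ρ A * (ENNReal.ofReal (2 ^ ((N:ℝ) * τ)) * ENNReal.ofReal (2 ^ (-(k:ℝ) * τ))) := by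
            refine mul_le_mul_right ?_ _
            rw [← ENNReal.ofReal_mul (by positivity), ← Real.rpow_add (by norm_num)]
            refine ENNReal.one_le_ofReal.mpr (Real.one_le_rpow one_le_two ?_)
            have : (k:ℝ) ≤ (N:ℝ) := hk.le
            nlinarith [hτ0.le]
        _ ≤ C' * ENNReal.ofReal (2 ^ (-(k:ℝ) * τ)) := by
            rw [← mul_assoc]
            exact mul_le_mul_left le_add_self _
  -- dyadic decomposition sets
  set S : ℕ → Set ℝ := fun k =>
    {β : ℝ | (2:ℝ) ^ (k:ℝ) ≤ |β|} ∩ {β : ℝ | |β| < (2:ℝ) ^ ((k:ℝ) + 1)} with hSdef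
  have hSmeas : ∀ k, MeasurableSet (S k) := fun k =>
    ((isClosed_le continuous_const continuous_abs).measurableSet).inter
      ((isOpen_lt continuous_abs continuous_const).measurableSet)
  -- pointwise bound
  have hpoint : ∀ β ∈ A, ENNReal.ofReal (|β| ^ p)
      ≤ ∑' k : ℕ, (S k).indicator (fun _ => ENNReal.ofReal (2 ^ (((k:ℝ) + 1) * p))) β := by
    intro β hβ
    have hβ1 : 1 ≤ |β| := le_of_lt hβ
    have hex : ∃ n : ℕ, |β| < (2:ℝ) ^ ((n:ℝ)) := by
      obtain ⟨n, hn⟩ := pow_unbounded_of_one_lt |β| (one_lt_two (α := ℝ))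
      exact ⟨n, by rw [Real.rpow_natCast]; exact hn⟩
    set m := Nat.find hex with hm
    have hmspec : |β| < (2:ℝ) ^ ((m:ℝ)) := Nat.find_spec hex
    have hm0 : m ≠ 0 := by
      intro h
      rw [h] at hmspec
      simp only [Nat.cast_zero, Real.rpow_zero] at hmspec
      linarith
    set k := m - 1 with hk
    have hkm : (k:ℝ) + 1 = (m:ℝ) := by
      rw [hk]
      have hms : m = m - 1 + 1 := (Nat.succ_pred_eq_of_pos (Nat.pos_of_ne_zero hm0)).symm
      rw [hms]
      push_cast
      ring
    have hklow : (2:ℝ) ^ ((k:ℝ)) ≤ |β| :=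
      not_lt.mp (Nat.find_min hex (Nat.pred_lt hm0))
    have hmem : β ∈ S k := ⟨hklow, by rw [hkm]; exact hmspec⟩
    refine le_trans ?_ (ENNReal.le_tsum k)
    rw [indicator_of_mem hmem]
    refine ENNReal.ofReal_le_ofReal ?_
    rw [Real.rpow_mul (by norm_num : (0:ℝ) ≤ 2)]
    exact Real.rpow_le_rpow (abs_nonneg _) (by rw [hkm]; exact hmspec.le) hp0.le
  -- geometric data
  set r := ENNReal.ofReal ((2:ℝ) ^ (p - τ)) with hrdef
  set D := ENNReal.ofReal ((2:ℝ) ^ p) * C' with hDdef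
  have hr1 : r < 1 :=
    ENNReal.ofReal_lt_one.mpr (Real.rpow_lt_one_of_one_lt_of_neg one_lt_two (by linarith))
  have hterm : ∀ k : ℕ, ENNReal.ofReal (2 ^ (((k:ℝ) + 1) * p)) *
      (C' * ENNReal.ofReal (2 ^ (-(k:ℝ) * τ))) = D * r ^ k := by
    intro k
    have e1 : ENNReal.ofReal ((2:ℝ) ^ (((k:ℝ) + 1) * p))
        = ENNReal.ofReal ((2:ℝ) ^ p) * ENNReal.ofReal ((2:ℝ) ^ ((k:ℝ) * p)) := by
      rw [← ENNReal.ofReal_mul (by positivity), ← Real.rpow_add (by norm_num)]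
      congr 1
      ring
    have e2 : r ^ k = ENNReal.ofReal ((2:ℝ) ^ ((k:ℝ) * p)) *
        ENNReal.ofReal ((2:ℝ) ^ (-(k:ℝ) * τ)) := by
      rw [hrdef, ← ENNReal.ofReal_pow (by positivity),
        ← Real.rpow_natCast ((2:ℝ) ^ (p - τ)) k, ← Real.rpow_mul (by norm_num : (0:ℝ) ≤ 2),
        ← ENNReal.ofReal_mul (by positivity), ← Real.rpow_add (by norm_num)]
      congr 1
      ring
    rw [e1, e2, hDdef]
    ring
  -- main chain
  calc (∫⁻ β in A, ENNReal.ofReal (|β| ^ p) ∂ρ)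
      ≤ ∫⁻ β in A, ∑' k : ℕ, (S k).indicator
          (fun _ => ENNReal.ofReal (2 ^ (((k:ℝ) + 1) * p))) β ∂ρ :=
        setLIntegral_mono (Measurable.ennreal_tsum fun k =>
          measurable_const.indicator (hSmeas k)) hpoint
    _ = ∑' k : ℕ, ∫⁻ β in A, (S k).indicator
          (fun _ => ENNReal.ofReal (2 ^ (((k:ℝ) + 1) * p))) β ∂ρ :=
        lintegral_tsum fun k => (measurable_const.indicator (hSmeas k)).aemeasurable
    _ = ∑' k : ℕ, ENNReal.ofReal (2 ^ (((k:ℝ) + 1) * p)) * ρ (S k ∩ A) := by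
        refine tsum_congr fun k => ?_
        rw [lintegral_indicator_const (hSmeas k), Measure.restrict_apply (hSmeas k)]
    _ ≤ ∑' k : ℕ, D * r ^ k := by
        refine ENNReal.tsum_le_tsum fun k => ?_
        rw [← hterm k]
        refine mul_le_mul_right ?_ _
        refine le_trans (measure_mono (inter_subset_inter_left _ inter_subset_left)) ?_
        exact htailk k
    _ = D * (1 - r)⁻¹ := by rw [ENNReal.tsum_mul_left, ENNReal.tsum_geometric]
    _ < ∞ := by
        refine ENNReal.mul_lt_top ?_ ?_
        · rw [hDdef]
          exact ENNReal.mul_lt_top ENNReal.ofReal_lt_top (lt_top_iff_ne_top.mpr hC')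
        · rw [ENNReal.inv_lt_top]
          exact tsub_pos_iff_lt.mpr hr1

/-- If `p_max > 0`, then `τ̄^{(q)}(ρ) = min(p_max, q)`, and consequently
`min(p_max, q) ≤ τ̲^{(q)}(ρ) ≤ q`. -/
theorem tauUpper_eq_min_pMax (ρ : Measure ℝ)
    (h0 : 0 < ρ {β : ℝ | 1 < |β|}) (h1 : ρ {β : ℝ | 1 < |β|} < ∞)
    (hpMax : 0 < pMax ρ) (q : ℝ) (hq : 0 ≤ q) :
    tauUpper ρ q = min (pMax ρ) (ENNReal.ofReal q) ∧
      min (pMax ρ) (ENNReal.ofReal q) ≤ tauLower ρ q ∧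
      tauLower ρ q ≤ ENNReal.ofReal q := by
  -- membership for τ > q (liminf version)
  have hmemL : ∀ τ : ℝ, q < τ → tauLower ρ q ≤ ENNReal.ofReal τ := by
    intro τ hτ
    exact sInf_le ⟨τ, le_trans hq hτ.le, rfl, liminf_top_of_gt ρ h0 hq hτ⟩
  -- tauLower ≤ ofReal q
  have hLle : tauLower ρ q ≤ ENNReal.ofReal q := by
    refine ENNReal.le_of_forall_pos_le_add fun ε hε _ => ?_
    have h := hmemL (q + ε) (by exact_mod_cast lt_add_of_pos_right q hε)
    rwa [ENNReal.ofReal_add hq ε.coe_nonneg, ENNReal.ofReal_coe_nnreal] at h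
  -- tauUpper ≤ tauLower
  have hUL : tauUpper ρ q ≤ tauLower ρ q := by
    refine sInf_le_sInf ?_
    rintro t ⟨τ, hτ0, rfl, hl⟩
    refine ⟨τ, hτ0, rfl, top_le_iff.mp ?_⟩
    rw [← hl]
    exact liminf_le_limsup
  -- lower bound for tauUpper
  have hUge : min (pMax ρ) (ENNReal.ofReal q) ≤ tauUpper ρ q := by
    refine le_sInf ?_
    rintro t ⟨τ, hτ0, rfl, hlim⟩
    by_contra hcon
    push_neg at hcon
    rw [lt_min_iff] at hcon
    obtain ⟨hcP, hcq⟩ := hcon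
    have hτq : τ < q := (ENNReal.ofReal_lt_ofReal_iff_of_nonneg hτ0).mp hcq
    obtain ⟨t', ht', hlt⟩ := lt_sSup_iff.mp hcP
    obtain ⟨p, hp0, rfl, hfin⟩ := ht'
    have hτp : τ < p := (ENNReal.ofReal_lt_ofReal_iff_of_nonneg hτ0).mp hlt
    have hfin' : (∫⁻ β in {β : ℝ | 1 < |β|}, ENNReal.ofReal (|β| ^ (min p q)) ∂ρ) < ∞ :=
      lt_of_le_of_lt (moment_mono ρ (le_min hp0.le hq) (min_le_left _ _)) hfin
    exact limsup_ne_top_of_moment ρ hτ0 (lt_min hτp hτq) (min_le_right _ _) hfin' hlim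
  -- key membership for tauUpper
  have hkey : ∀ τ : ℝ, 0 ≤ τ → min (pMax ρ) (ENNReal.ofReal q) < ENNReal.ofReal τ →
      tauUpper ρ q ≤ ENNReal.ofReal τ := by
    intro τ hτ0 hmin
    rcases lt_or_ge q τ with hqτ | hτq
    · refine sInf_le ⟨τ, hτ0, rfl, top_le_iff.mp ?_⟩
      rw [← liminf_top_of_gt ρ h0 hq hqτ]
      exact liminf_le_limsup
    · have hPm : pMax ρ < ENNReal.ofReal τ := by
        rcases min_lt_iff.mp hmin with h | h
        · exact h
        · exact absurd ((ENNReal.ofReal_lt_ofReal_iff_of_nonneg hq).mp h)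
            (not_lt.mpr hτq)
      have hτpos : 0 < τ := by
        by_contra hneg
        push_neg at hneg
        rw [ENNReal.ofReal_eq_zero.mpr hneg] at hPm
        exact (not_lt.mpr (zero_le : 0 ≤ pMax ρ)) hPm
      have hlim : limsup (fun ξ : ℝ => ENNReal.ofReal (ξ ^ (-τ)) * tailFunctional ρ q ξ)
          (𝓝[>] 0) = ∞ := by
        by_contra hns
        obtain ⟨c, hc1, hc2⟩ := exists_between hPm
        have hcne : c ≠ ∞ := hc2.ne_top
        have hp0 : 0 < c.toReal := ENNReal.toReal_pos (ne_of_gt (hpMax.trans hc1)) hcne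
        have hpτ : c.toReal < τ := (ENNReal.lt_ofReal_iff_toReal_lt hcne).mp hc2
        have hfin := moment_finite_of_limsup_ne_top ρ h1 hτpos hτq hp0 hpτ hns
        have : c ≤ pMax ρ := le_sSup ⟨c.toReal, hp0, (ENNReal.ofReal_toReal hcne).symm, hfin⟩
        exact absurd hc1 (not_lt.mpr this)
      exact sInf_le ⟨τ, hτ0, rfl, hlim⟩
  -- tauUpper ≤ min
  have hUle : tauUpper ρ q ≤ min (pMax ρ) (ENNReal.ofReal q) := by
    set M := min (pMax ρ) (ENNReal.ofReal q) with hM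
    have hMne : M ≠ ∞ := ne_top_of_le_ne_top ENNReal.ofReal_ne_top (min_le_right _ _)
    refine ENNReal.le_of_forall_pos_le_add fun ε hε _ => ?_
    have hτ0 : 0 ≤ M.toReal + (ε:ℝ) := add_nonneg ENNReal.toReal_nonneg ε.coe_nonneg
    have hoR : ENNReal.ofReal (M.toReal + (ε:ℝ)) = M + ε := by
      rw [ENNReal.ofReal_add ENNReal.toReal_nonneg ε.coe_nonneg,
        ENNReal.ofReal_toReal hMne, ENNReal.ofReal_coe_nnreal]
    have hMlt : M < ENNReal.ofReal (M.toReal + (ε:ℝ)) := by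
      rw [hoR]
      exact ENNReal.lt_add_right hMne (by exact_mod_cast hε.ne')
    have := hkey (M.toReal + (ε:ℝ)) hτ0 hMlt
    rwa [hoR] at this
  exact ⟨le_antisymm hUle hUge, le_trans hUge hUL, hLle⟩
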